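/- Let Λ = ℤℓ[[γ−1]], ω_n = γ^{ℓⁿ}−1, and let T be a finitely generated torsion Λ-module with characteristic power series coprime to all ω_n, F its maximal finite submodule, and T̄ = T/F. Then the image of T/ω_nT in the direct limit T_∞ = lim→ T/ω_mT is isomorphic to T̄/ω_nT̄, and this image equals the submodule of fixed points T_∞^{Γ_n}, i.e. the elements of T_∞ annihilated by ω_n. -/

import Mathlib

/-- `χ` is a characteristic power series of the finitely generated torsion
`Λ = ℤ_[p][[T]]`-module `M`: by the structure theorem, `M` is pseudo-isomorphic
(i.e. admits a map with finite kernel and cokernel) to an elementary module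
`⊕ᵢ Λ/(Pᵢ)` with the `Pᵢ` nonzero, and `χ = ∏ᵢ Pᵢ`. -/
def IsCharSeries (p : ℕ) [Fact p.Prime] (M : Type*) [AddCommGroup M]
    [Module (PowerSeries ℤ_[p]) M] (χ : PowerSeries ℤ_[p]) : Prop :=
  ∃ (n : ℕ) (P : Fin n → PowerSeries ℤ_[p]),
    (∀ i, P i ≠ 0) ∧ χ = ∏ i, P i ∧
    ∃ f : M →ₗ[PowerSeries ℤ_[p]] (∀ i, PowerSeries ℤ_[p] ⧸ Ideal.span {P i}),
      Finite (LinearMap.ker f) ∧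
      Finite ((∀ i, PowerSeries ℤ_[p] ⧸ Ideal.span {P i}) ⧸ LinearMap.range f)
/-- `ω_n = γ^{pⁿ} − 1` in the Iwasawa algebra `Λ = ℤ_[p][[γ−1]] = ℤ_[p][[T]]`,
where `γ = 1 + T`. -/
noncomputable def Om (p : ℕ) [Fact p.Prime] (n : ℕ) : PowerSeries ℤ_[p] :=
  (1 + PowerSeries.X) ^ (p ^ n) - 1

/-- the quotient `ω_m/ω_n = Σ_{k < p^{m−n}} (γ^{pⁿ})^k` (for `m ≥ n`),
a distinguished polynomial in `Λ`. -/
noncomputable def Nu (p : ℕ) [Fact p.Prime] (n m : ℕ) : PowerSeries ℤ_[p] :=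
  ∑ k ∈ Finset.range (p ^ (m - n)), ((1 + PowerSeries.X) ^ (p ^ n)) ^ k


section IwasawaAux

open PowerSeries

variable (p : ℕ) [Fact p.Prime]

lemma coeff_one_pow (N : ℕ) :
    (PowerSeries.coeff (R := ℤ_[p]) 1) ((1 + PowerSeries.X : PowerSeries ℤ_[p]) ^ N) = (N : ℤ_[p]) := by
  induction N with
  | zero => simp
  | succ N ih =>
      have h0 : (PowerSeries.coeff (R := ℤ_[p]) 0) ((1 + PowerSeries.X : PowerSeries ℤ_[p]) ^ N) = 1 := by
        rw [PowerSeries.coeff_zero_eq_constantCoeff]; simp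
      rw [pow_succ, mul_add, mul_one, map_add, ih, PowerSeries.coeff_succ_mul_X, h0]
      push_cast; ring

lemma om_ne_zero (n : ℕ) : Om p n ≠ 0 := by
  intro h
  have := congrArg (PowerSeries.coeff (R := ℤ_[p]) 1) h
  rw [Om, map_sub, coeff_one_pow, map_zero] at this
  have h1 : (PowerSeries.coeff (R := ℤ_[p]) 1) (1 : PowerSeries ℤ_[p]) = 0 := by simp
  rw [h1, sub_zero] at this
  exact_mod_cast (pow_ne_zero n (Fact.out (p := p.Prime)).ne_zero) (by exact_mod_cast this)

lemma nu_mul_om {n m : ℕ} (h : n ≤ m) : Nu p n m * Om p n = Om p m := by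
  rw [Nu, Om, Om, geom_sum_mul, ← pow_mul, ← pow_add, Nat.add_sub_cancel' h]

lemma nu_self (n : ℕ) : Nu p n n = 1 := by
  simp [Nu]

lemma nu_trans {n m k : ℕ} (h1 : n ≤ m) (h2 : m ≤ k) :
    Nu p m k * Nu p n m = Nu p n k := by
  have := om_ne_zero p n
  apply mul_right_cancel₀ this
  rw [mul_assoc, nu_mul_om p h1, nu_mul_om p h2, nu_mul_om p (h1.trans h2)]

lemma X_mem_max : (PowerSeries.X : PowerSeries ℤ_[p]) ∈ IsLocalRing.maximalIdeal (PowerSeries ℤ_[p]) := by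
  rw [IsLocalRing.mem_maximalIdeal, mem_nonunits_iff]
  intro h
  rw [PowerSeries.isUnit_iff_constantCoeff] at h
  simp at h

lemma p_nonunit : ¬ IsUnit (p : ℤ_[p]) := by
  rw [PadicInt.isUnit_iff, PadicInt.norm_p]
  have hp : (1:ℝ) < p := by exact_mod_cast (Fact.out (p := p.Prime)).one_lt
  intro h
  have : (p:ℝ) = 1 := by
    have := congrArg (fun x : ℝ => x⁻¹) h
    simpa using this
  linarith

lemma p_mem_max : ((p : ℕ) : PowerSeries ℤ_[p]) ∈ IsLocalRing.maximalIdeal (PowerSeries ℤ_[p]) := by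
  rw [IsLocalRing.mem_maximalIdeal, mem_nonunits_iff]
  intro h
  rw [PowerSeries.isUnit_iff_constantCoeff] at h
  rw [map_natCast] at h
  exact p_nonunit p h

lemma nu_succ_mem (j : ℕ) :
    Nu p j (j + 1) ∈ IsLocalRing.maximalIdeal (PowerSeries ℤ_[p]) := by
  rw [IsLocalRing.mem_maximalIdeal, mem_nonunits_iff]
  intro h
  rw [PowerSeries.isUnit_iff_constantCoeff] at h
  have : (PowerSeries.constantCoeff (R := ℤ_[p])) (Nu p j (j+1)) = (p : ℤ_[p]) := by
    rw [Nu]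
    rw [map_sum]
    have : ∀ k ∈ Finset.range (p ^ (j + 1 - j)),
        (PowerSeries.constantCoeff (R := ℤ_[p])) ((((1 + PowerSeries.X) ^ p ^ j) : PowerSeries ℤ_[p]) ^ k) = 1 := by
      intro k _
      rw [← pow_mul, map_pow]
      simp
    rw [Finset.sum_congr rfl this]
    simp [Nat.add_sub_cancel_left]
  rw [this] at h
  exact p_nonunit p h

lemma nu_mem_pow (n k : ℕ) :
    Nu p n (n + k) ∈ (IsLocalRing.maximalIdeal (PowerSeries ℤ_[p])) ^ k := by
  induction k with
  | zero =>
      have : Nu p n (n + 0) = 1 := by rw [Nat.add_zero, nu_self]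
      rw [this, pow_zero, Ideal.one_eq_top]; trivial
  | succ k ih =>
      have ht : Nu p n (n + (k+1)) = Nu p n (n + k) * Nu p (n+k) (n + k + 1) := by
        rw [mul_comm, nu_trans p (Nat.le_add_right n k) (by omega)]
        ring_nf
      rw [ht, pow_succ]
      exact Ideal.mul_mem_mul ih (nu_succ_mem p (n+k))


-- Nakayama: every finite module over a local ring is killed by a power of the maximal ideal
lemma killfin (R : Type*) [CommRing R] [IsLocalRing R]
    (W : Type*) [AddCommGroup W] [Module R W] [Finite W] :
    ∃ k : ℕ, ∀ r ∈ (IsLocalRing.maximalIdeal R) ^ k, ∀ x : W, r • x = 0 := by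
  set m := IsLocalRing.maximalIdeal R with hm
  set N : ℕ → Submodule R W := fun k => (m ^ k) • (⊤ : Submodule R W) with hN
  have hanti : ∀ k k', k ≤ k' → N k' ≤ N k := by
    intro k k' h
    exact Submodule.smul_mono_left (Ideal.pow_le_pow_right h)
  have hfin : Finite (Submodule R W) :=
    Finite.of_injective (fun s : Submodule R W => (s : Set W)) SetLike.coe_injective
  obtain ⟨a, b, hne, hab⟩ := Finite.exists_ne_map_eq_of_infinite N
  wlog hlt : a < b generalizing a b
  · exact this b a hne.symm hab.symm (by omega)
  have hstep : N a = N (a + 1) :=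
    le_antisymm ((hab ▸ hanti (a+1) b hlt) : N a ≤ N (a+1)) (hanti a (a+1) (by omega))
  -- Nakayama
  have hfg : (N a).FG := by
    have : Module.Finite R (N a) := Module.Finite.of_finite
    exact Module.Finite.iff_fg.mp this
  have hle : N a ≤ m • N a := by
    have : N (a + 1) = m • N a := by
      rw [hN]
      show m ^ (a+1) • (⊤ : Submodule R W) = m • (m ^ a • ⊤)
      rw [pow_succ']
      exact Submodule.smul_assoc m (m ^ a) ⊤
    exact le_of_eq (hstep.trans this)
  have hbot : N a = ⊥ :=
    Submodule.eq_bot_of_le_smul_of_le_jacobson_bot m (N a) hfg hle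
      (IsLocalRing.maximalIdeal_le_jacobson ⊥)
  refine ⟨a, fun r hr x => ?_⟩
  have : r • x ∈ N a := Submodule.smul_mem_smul hr Submodule.mem_top
  rw [hbot] at this
  simpa using this


lemma DL (P a : PowerSeries ℤ_[p]) (hP : P ≠ 0)
    (hX : P ∣ PowerSeries.X * a) (hp : P ∣ ((p : ℕ) : PowerSeries ℤ_[p]) * a) : P ∣ a := by
  obtain ⟨u, hu⟩ := hX
  obtain ⟨v, hv⟩ := hp
  have key : ((p : ℕ) : PowerSeries ℤ_[p]) * u = PowerSeries.X * v := by
    apply mul_left_cancel₀ hP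
    calc P * (((p : ℕ) : PowerSeries ℤ_[p]) * u) = ((p : ℕ) : PowerSeries ℤ_[p]) * (P * u) := by ring
    _ = ((p : ℕ) : PowerSeries ℤ_[p]) * (PowerSeries.X * a) := by rw [← hu]
    _ = PowerSeries.X * (((p : ℕ) : PowerSeries ℤ_[p]) * a) := by ring
    _ = PowerSeries.X * (P * v) := by rw [← hv]
    _ = P * (PowerSeries.X * v) := by ring
  have hc : (PowerSeries.constantCoeff (R := ℤ_[p])) u = 0 := by
    have := congrArg (PowerSeries.constantCoeff (R := ℤ_[p])) key
    rw [map_mul, map_mul, PowerSeries.constantCoeff_X, zero_mul, map_natCast] at this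
    have hpne : ((p : ℕ) : ℤ_[p]) ≠ 0 := by
      exact_mod_cast (Fact.out (p := p.Prime)).ne_zero
    exact (mul_eq_zero.mp this).resolve_left hpne
  obtain ⟨w, hw⟩ := PowerSeries.X_dvd_iff.mpr hc
  refine ⟨w, ?_⟩
  apply mul_left_cancel₀ (PowerSeries.X_ne_zero : (PowerSeries.X : PowerSeries ℤ_[p]) ≠ 0)
  calc PowerSeries.X * a = P * u := hu
  _ = P * (PowerSeries.X * w) := by rw [← hw]
  _ = PowerSeries.X * (P * w) := by ring

lemma REG (P w : PowerSeries ℤ_[p]) (hP : P ≠ 0)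
    (hfin : Finite (PowerSeries ℤ_[p] ⧸ Ideal.span {P, w})) :
    ∀ a, P ∣ w * a → P ∣ a := by
  obtain ⟨k, hk⟩ := killfin (PowerSeries ℤ_[p]) (PowerSeries ℤ_[p] ⧸ Ideal.span {P, w})
  have hspan : ∀ r ∈ (IsLocalRing.maximalIdeal (PowerSeries ℤ_[p])) ^ k,
      r ∈ Ideal.span {P, w} := by
    intro r hr
    have h2 := hk r hr (Ideal.Quotient.mk (Ideal.span {P, w}) 1)
    have h1 : r • (Ideal.Quotient.mk (Ideal.span {P, w}) 1)
        = Ideal.Quotient.mk (Ideal.span {P, w}) r := by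
      rw [← Ideal.Quotient.mk_eq_mk, ← Submodule.Quotient.mk_smul, smul_eq_mul, mul_one, Ideal.Quotient.mk_eq_mk]
    rw [h1] at h2
    exact Ideal.Quotient.eq_zero_iff_mem.mp h2
  -- main induction
  have main : ∀ i : ℕ, ∀ g : PowerSeries ℤ_[p], P ∣ w * g →
      (∀ r ∈ (IsLocalRing.maximalIdeal (PowerSeries ℤ_[p])) ^ i, P ∣ r * g) → P ∣ g := by
    intro i
    induction i with
    | zero =>
        intro g _ h
        have := h 1 (by rw [pow_zero, Ideal.one_eq_top]; trivial)
        rwa [one_mul] at this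
    | succ i ih =>
        intro g hwg h
        refine ih g hwg ?_
        intro r hr
        have hXr : P ∣ PowerSeries.X * (r * g) := by
          have : PowerSeries.X * r ∈ (IsLocalRing.maximalIdeal (PowerSeries ℤ_[p])) ^ (i+1) := by
            rw [pow_succ']
            exact Ideal.mul_mem_mul (X_mem_max p) hr
          have := h _ this
          rwa [mul_assoc] at this
        have hpr : P ∣ ((p : ℕ) : PowerSeries ℤ_[p]) * (r * g) := by
          have : ((p : ℕ) : PowerSeries ℤ_[p]) * r ∈ (IsLocalRing.maximalIdeal (PowerSeries ℤ_[p])) ^ (i+1) := by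
            rw [pow_succ']
            exact Ideal.mul_mem_mul (p_mem_max p) hr
          have := h _ this
          rwa [mul_assoc] at this
        exact DL p P (r * g) hP hXr hpr
  intro a hwa
  refine main k a hwa ?_
  intro r hr
  obtain ⟨c, d, hcd⟩ := Ideal.mem_span_pair.mp (hspan r hr)
  have : r * a = c * (P * a) + d * (w * a) := by rw [← hcd]; ring
  rw [this]
  exact dvd_add (Dvd.dvd.mul_left (dvd_mul_right P a) c) (Dvd.dvd.mul_left hwa d)


end IwasawaAux

set_option maxHeartbeats 1000000

/-- let `M` be a finitely generated torsion `Λ`-module with characteristic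
power series coprime to all `ω_n`, `F` its maximal finite submodule, and `M̄ = M/F`.
Let `L` together with the maps `g n : M/ω_nM → L` be the direct limit
`M_∞ = lim→ M/ω_nM` along the transition maps given by multiplication by `ω_m/ω_n`
(characterized by compatibility, joint surjectivity, and the kernel description).
Then the image of `M/ω_nM` in `M_∞` equals the fixed-point submodule
`M_∞^{Γ_n} = ker(ω_n : M_∞ → M_∞)`, and it is isomorphic to `M̄/ω_nM̄`. -/
theorem stmt9 (p : ℕ) [Fact p.Prime]
    (M : Type*) [AddCommGroup M] [Module (PowerSeries ℤ_[p]) M]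
    [Module.Finite (PowerSeries ℤ_[p]) M]
    (htors : Module.IsTorsion (PowerSeries ℤ_[p]) M)
    (χ : PowerSeries ℤ_[p]) (hχ : IsCharSeries p M χ)
    (hcop : ∀ n, Finite (PowerSeries ℤ_[p] ⧸ Ideal.span {χ, Om p n}))
    (F : Submodule (PowerSeries ℤ_[p]) M) (hFfin : Finite F)
    (hFmax : ∀ F' : Submodule (PowerSeries ℤ_[p]) M, Finite F' → F' ≤ F)
    (L : Type*) [AddCommGroup L] [Module (PowerSeries ℤ_[p]) L]
    (g : ∀ n : ℕ,
      (M ⧸ LinearMap.range (LinearMap.lsmul (PowerSeries ℤ_[p]) M (Om p n)))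
        →ₗ[PowerSeries ℤ_[p]] L)
    (hcompat : ∀ n m : ℕ, n ≤ m → ∀ x : M,
      g m (Submodule.Quotient.mk ((Nu p n m) • x)) = g n (Submodule.Quotient.mk x))
    (hsurj : ∀ y : L, ∃ n x, g n x = y)
    (hker : ∀ (n : ℕ) (x : M),
      g n (Submodule.Quotient.mk x) = 0 ↔ ∃ m, n ≤ m ∧
        (Nu p n m) • x ∈ LinearMap.range (LinearMap.lsmul (PowerSeries ℤ_[p]) M (Om p m))) :
    ∀ n : ℕ,
      LinearMap.range (g n) =
        LinearMap.ker (LinearMap.lsmul (PowerSeries ℤ_[p]) L (Om p n)) ∧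
      Nonempty ((LinearMap.range (g n)) ≃ₗ[PowerSeries ℤ_[p]]
        ((M ⧸ F) ⧸ LinearMap.range (LinearMap.lsmul (PowerSeries ℤ_[p]) (M ⧸ F) (Om p n)))) := by
  classical
  obtain ⟨n₀, P, hPne, hχprod, f, hkerfin, hcokfin⟩ := hχ
  -- each Λ/(P i, ω_m) is finite
  have hfinPi : ∀ (i : Fin n₀) (m : ℕ),
      Finite (PowerSeries ℤ_[p] ⧸ Ideal.span {P i, Om p m}) := by
    intro i m
    have hle : Ideal.span {χ, Om p m} ≤ Ideal.span {P i, Om p m} := by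
      rw [Ideal.span_le]
      rintro x hx
      simp only [Set.mem_insert_iff, Set.mem_singleton_iff] at hx
      rcases hx with rfl | rfl
      · obtain ⟨c, hc⟩ : P i ∣ x := hχprod ▸ Finset.dvd_prod_of_mem P (Finset.mem_univ i)
        exact Ideal.mem_span_pair.mpr ⟨c, 0, by rw [hc]; ring⟩
      · exact Ideal.mem_span_pair.mpr ⟨0, 1, by ring⟩
    have hs : Function.Surjective (Ideal.Quotient.factor hle) := by
      intro y
      obtain ⟨x, rfl⟩ := Ideal.Quotient.mk_surjective y
      exact ⟨Ideal.Quotient.mk _ x, Ideal.Quotient.factor_mk hle x⟩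
    have := hcop m
    exact Finite.of_surjective _ hs
  -- kernel of ω_m on M is contained in ker f, hence finite, hence ≤ F
  have hkerle : ∀ m : ℕ,
      LinearMap.ker (LinearMap.lsmul (PowerSeries ℤ_[p]) M (Om p m)) ≤ F := by
    intro m
    have hsub : LinearMap.ker (LinearMap.lsmul (PowerSeries ℤ_[p]) M (Om p m)) ≤ LinearMap.ker f := by
      intro x hx
      rw [LinearMap.mem_ker] at hx ⊢
      rw [LinearMap.lsmul_apply] at hx
      have h0 : Om p m • f x = 0 := by rw [← map_smul, hx, map_zero]
      funext i
      have h0i : Om p m • (f x i) = 0 := by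
        have h := congrFun h0 i
        simp only [Pi.smul_apply, Pi.zero_apply] at h
        exact h
      obtain ⟨a, ha⟩ := Ideal.Quotient.mk_surjective (f x i)
      have hmk : Om p m • (f x i) = Ideal.Quotient.mk _ (Om p m * a) := by
        rw [← ha, ← Ideal.Quotient.mk_eq_mk, ← Ideal.Quotient.mk_eq_mk,
          ← Submodule.Quotient.mk_smul, smul_eq_mul]
      rw [hmk] at h0i
      have hdvd : P i ∣ Om p m * a := by
        rw [← Ideal.mem_span_singleton]
        exact Ideal.Quotient.eq_zero_iff_mem.mp h0i
      have hPa : P i ∣ a := REG p (P i) (Om p m) (hPne i) (hfinPi i m) a hdvd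
      show f x i = (0 : ∀ i, PowerSeries ℤ_[p] ⧸ Ideal.span {P i}) i
      rw [← ha]
      have : (Ideal.Quotient.mk (Ideal.span {P i})) a = 0 := by
        rw [Ideal.Quotient.eq_zero_iff_mem, Ideal.mem_span_singleton]
        exact hPa
      rw [this]
      rfl
    have : Finite (LinearMap.ker (LinearMap.lsmul (PowerSeries ℤ_[p]) M (Om p m))) :=
      Finite.of_injective (Submodule.inclusion hsub) (Submodule.inclusion_injective hsub)
    exact hFmax _ this
  -- F is killed by a power of the maximal ideal
  obtain ⟨k₀, hk₀⟩ := killfin (PowerSeries ℤ_[p]) F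
  have killF : ∀ r ∈ (IsLocalRing.maximalIdeal (PowerSeries ℤ_[p])) ^ k₀,
      ∀ w ∈ F, r • w = 0 := by
    intro r hr w hw
    have h := congrArg (Subtype.val) (hk₀ r hr ⟨w, hw⟩)
    rw [Submodule.coe_smul] at h
    rw [ZeroMemClass.coe_zero] at h
    exact h
  -- the image of F dies at every level
  have gF : ∀ (N : ℕ) (w : M), w ∈ F → g N (Submodule.Quotient.mk w) = 0 := by
    intro N w hw
    rw [hker N w]
    refine ⟨N + k₀, Nat.le_add_right _ _, ?_⟩
    have : Nu p N (N + k₀) • w = 0 := killF _ (nu_mem_pow p N k₀) w hw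
    rw [this]
    exact ⟨0, map_zero _⟩
  intro n
  -- key: smul computation in L
  have hsmulL : ∀ (N : ℕ) (x : M), Om p n • (g N (Submodule.Quotient.mk x))
      = g N (Submodule.Quotient.mk (Om p n • x)) := by
    intro N x
    rw [← map_smul, Submodule.Quotient.mk_smul]
  constructor
  · -- range (g n) = ker (ω_n on L)
    apply le_antisymm
    · rintro y ⟨q, rfl⟩
      obtain ⟨x, rfl⟩ := Submodule.Quotient.mk_surjective _ q
      rw [LinearMap.mem_ker, LinearMap.lsmul_apply, hsmulL]
      have : (Submodule.Quotient.mk (Om p n • x) :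
          M ⧸ LinearMap.range (LinearMap.lsmul (PowerSeries ℤ_[p]) M (Om p n))) = 0 := by
        rw [Submodule.Quotient.mk_eq_zero]
        exact ⟨x, rfl⟩
      rw [this, map_zero]
    · intro y hy
      rw [LinearMap.mem_ker, LinearMap.lsmul_apply] at hy
      obtain ⟨m, q, hq⟩ := hsurj y
      obtain ⟨x, rfl⟩ := Submodule.Quotient.mk_surjective _ q
      -- lift to level m' = max m n
      set m' := max m n with hm'
      have hy1 : g m' (Submodule.Quotient.mk (Nu p m m' • x)) = y := by
        rw [hcompat m m' (le_max_left m n) x, hq]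
      set x₁ := Nu p m m' • x with hx₁
      have h0 : g m' (Submodule.Quotient.mk (Om p n • x₁)) = 0 := by
        rw [← hsmulL, hy1, hy]
      obtain ⟨m₂, hm₂, z, hz⟩ := (hker m' (Om p n • x₁)).mp h0
      rw [LinearMap.lsmul_apply] at hz
      set x₂ := Nu p m' m₂ • x₁ with hx₂
      have hy2 : g m₂ (Submodule.Quotient.mk x₂) = y := by
        rw [hcompat m' m₂ hm₂ x₁, hy1]
      have hnm₂ : n ≤ m₂ := le_trans (le_max_right m n) hm₂
      -- w := x₂ - ν_{n,m₂} z  lies in ker ω_n ≤ F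
      set w := x₂ - Nu p n m₂ • z with hwdef
      have hwker : Om p n • w = 0 := by
        have e1 : Om p n • x₂ = Om p m₂ • z := by
          rw [hx₂, smul_comm, hz]
        have e2 : Om p n • (Nu p n m₂ • z) = Om p m₂ • z := by
          rw [smul_smul, mul_comm (Om p n) (Nu p n m₂), nu_mul_om p hnm₂]
        rw [hwdef, smul_sub, e1, e2, sub_self]
      have hwF : w ∈ F := hkerle n (by rw [LinearMap.mem_ker, LinearMap.lsmul_apply]; exact hwker)
      have : y = g n (Submodule.Quotient.mk z) := by
        have hx₂w : x₂ = w + Nu p n m₂ • z := by rw [hwdef]; abel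
        rw [← hy2, hx₂w]
        have : (Submodule.Quotient.mk (w + Nu p n m₂ • z) :
            M ⧸ LinearMap.range (LinearMap.lsmul (PowerSeries ℤ_[p]) M (Om p m₂)))
            = Submodule.Quotient.mk w + Submodule.Quotient.mk (Nu p n m₂ • z) := by
          rw [Submodule.Quotient.mk_add]
        rw [this, map_add, gF m₂ w hwF, zero_add, hcompat n m₂ hnm₂ z]
      exact this ▸ ⟨Submodule.Quotient.mk z, rfl⟩
  · -- the isomorphism
    set S' := LinearMap.range (LinearMap.lsmul (PowerSeries ℤ_[p]) M (Om p n)) with hS'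
    set Φ := (g n).comp S'.mkQ with hΦ
    have hrange : LinearMap.range Φ = LinearMap.range (g n) := by
      rw [hΦ, LinearMap.range_comp, Submodule.range_mkQ, Submodule.map_top]
    have hkerΦ : LinearMap.ker Φ = F ⊔ S' := by
      apply le_antisymm
      · intro x hx
        rw [LinearMap.mem_ker, hΦ, LinearMap.comp_apply, Submodule.mkQ_apply] at hx
        obtain ⟨m, hm, z, hz⟩ := (hker n x).mp hx
        rw [LinearMap.lsmul_apply] at hz
        have hwker : Om p m • (x - Om p n • z) = 0 := by
          have e2 : Om p m • (Om p n • z) = Om p m • x := by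
            rw [smul_comm, hz, smul_smul, mul_comm (Om p n) (Nu p n m), nu_mul_om p hm]
          rw [smul_sub, e2, sub_self]
        have hmemF : x - Om p n • z ∈ F :=
          hkerle m (by rw [LinearMap.mem_ker, LinearMap.lsmul_apply]; exact hwker)
        have : x = (x - Om p n • z) + Om p n • z := by abel
        rw [this]
        exact Submodule.add_mem_sup hmemF ⟨z, rfl⟩
      · rw [sup_le_iff]
        constructor
        · intro w hw
          rw [LinearMap.mem_ker, hΦ, LinearMap.comp_apply, Submodule.mkQ_apply]
          exact gF n w hw
        · intro s hs
          rw [LinearMap.mem_ker, hΦ, LinearMap.comp_apply, Submodule.mkQ_apply]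
          have : (Submodule.Quotient.mk s : M ⧸ S') = 0 := by
            rw [Submodule.Quotient.mk_eq_zero]; exact hs
          rw [this, map_zero]
    -- now build the equivalence
    have e4 : (F ⊔ S').map F.mkQ
        = LinearMap.range (LinearMap.lsmul (PowerSeries ℤ_[p]) (M ⧸ F) (Om p n)) := by
      rw [Submodule.map_sup]
      have h1 : F.map F.mkQ = ⊥ := by
        rw [eq_bot_iff]
        rintro q ⟨a, ha, rfl⟩
        rw [Submodule.mem_bot, Submodule.mkQ_apply, Submodule.Quotient.mk_eq_zero]
        exact ha
      have h2 : S'.map F.mkQ = LinearMap.range (LinearMap.lsmul (PowerSeries ℤ_[p]) (M ⧸ F) (Om p n)) := by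
        apply le_antisymm
        · rintro q hq
          rw [Submodule.mem_map] at hq
          obtain ⟨x, hx, rfl⟩ := hq
          rw [hS', LinearMap.mem_range] at hx
          obtain ⟨a, rfl⟩ := hx
          rw [LinearMap.mem_range]
          refine ⟨F.mkQ a, ?_⟩
          rw [LinearMap.lsmul_apply, LinearMap.lsmul_apply, ← map_smul]
        · rintro q hq
          rw [LinearMap.mem_range] at hq
          obtain ⟨b, rfl⟩ := hq
          obtain ⟨a, rfl⟩ := F.mkQ_surjective b
          rw [Submodule.mem_map]
          refine ⟨Om p n • a, ?_, ?_⟩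
          · rw [hS', LinearMap.mem_range]
            exact ⟨a, rfl⟩
          · rw [LinearMap.lsmul_apply, map_smul]
      rw [h1, h2, bot_sup_eq]
    exact ⟨(LinearEquiv.ofEq _ _ hrange.symm).trans
      ((Φ.quotKerEquivRange).symm.trans
        ((Submodule.quotEquivOfEq _ _ hkerΦ).trans
          ((Submodule.quotientQuotientEquivQuotient F (F ⊔ S') le_sup_left).symm.trans
            (Submodule.quotEquivOfEq _ _ e4))))⟩
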